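/- Let n ∈ ℤ^+, ℓ > 0, and let R₁, R₂ ⊆ ℤ^d be finite regions with max(|∂R₁|, |∂R₂|) ≤ n. If B_ℓ(R₁) = B_ℓ(R₂), then for the metric d(R₁,R₂) = ν|R₁ Δ R₂|^{1/2} one has d(R₁,R₂) ≤ ν b₃ 2^{ℓ/2} n^{1/2} with b₃ = 2(√2+1)√(2b₂), where b₂ = b₂(d) is the constant in the coarse-graining increment bound |B_j(R) Δ B_{j−1}(R)| ≤ b₂ 2^j |∂R|. -/

import Mathlib

/-- Points of the lattice `ℤ^d`. -/
abbrev Pt (d : ℕ) := Fin d → ℤ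

/-- Two lattice points are adjacent if they are distinct and at `L^∞`-distance at most 1
(i.e. exactly 1). -/
def adj {d : ℕ} (s t : Pt d) : Prop := s ≠ t ∧ ∀ i, |s i - t i| ≤ 1

/-- A set `R ⊆ ℤ^d` is connected if any two of its points are joined by a path inside `R`
whose consecutive points are at `L^∞`-distance 1. -/
def connectedIn {d : ℕ} (R : Set (Pt d)) : Prop :=
  ∀ s ∈ R, ∀ t ∈ R, Relation.ReflTransGen (fun a b => a ∈ R ∧ b ∈ R ∧ adj a b) s t

/-- The external boundary `∂R = {s ∉ R : dist_∞(s, R) = 1}`. -/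
def extBoundary {d : ℕ} (R : Set (Pt d)) : Set (Pt d) :=
  {s | s ∉ R ∧ ∃ t ∈ R, adj s t}

/-- The interior `Int R`: the union of the finite connected components of the complement. -/
def latticeInt {d : ℕ} (R : Set (Pt d)) : Set (Pt d) :=
  {s | s ∉ R ∧
    Set.Finite {t | Relation.ReflTransGen (fun a b => a ∉ R ∧ b ∉ R ∧ adj a b) s t}}

/-- The `ℓ`-cube based at `2^ℓ s`: `(∏_i [2^ℓ s_i, 2^ℓ (s_i+1))) ∩ ℤ^d`. -/
def cube {d : ℕ} (ℓ : ℕ) (s : Pt d) : Set (Pt d) :=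
  {t | ∀ i, 2 ^ ℓ * s i ≤ t i ∧ t i < 2 ^ ℓ * (s i + 1)}

/-- The coarse-grained region `B_ℓ(R)`: the union of all `ℓ`-cubes containing at least half
of their `2^{ℓ d}` points in `R`. -/
def coarse {d : ℕ} (ℓ : ℕ) (R : Set (Pt d)) : Set (Pt d) :=
  ⋃ s ∈ {s : Pt d | 2 ^ (ℓ * d) ≤ 2 * (cube ℓ s ∩ R).ncard}, cube ℓ s

lemma cube_finite {d : ℕ} (ℓ : ℕ) (s : Pt d) : (cube ℓ s).Finite := by
  apply Set.Finite.subset (Set.Finite.pi (fun i : Fin d =>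
    Set.finite_Icc (2 ^ ℓ * s i) (2 ^ ℓ * (s i + 1))))
  intro t ht i _
  exact ⟨(ht i).1, le_of_lt (ht i).2⟩

lemma cube_base_eq {d : ℕ} {ℓ : ℕ} {s : Pt d} {t : Pt d} (ht : t ∈ cube ℓ s) :
    s = fun i => t i / 2 ^ ℓ := by
  funext i
  have h2 : (0:ℤ) < 2 ^ ℓ := by positivity
  have h1 := (ht i).1
  have h2' := (ht i).2
  have hle : s i ≤ t i / 2 ^ ℓ := by
    rw [Int.le_ediv_iff_mul_le h2]; linarith [h1, mul_comm ((2:ℤ)^ℓ) (s i)]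
  have hlt : t i / 2 ^ ℓ < s i + 1 := by
    rw [Int.ediv_lt_iff_lt_mul h2]; linarith [h2', mul_comm ((2:ℤ)^ℓ) (s i + 1)]
  omega

lemma coarse_finite {d : ℕ} (ℓ : ℕ) {R : Set (Pt d)} (hR : R.Finite) :
    (coarse ℓ R).Finite := by
  apply Set.Finite.subset (hR.biUnion (fun t _ => cube_finite ℓ (fun i => t i / 2 ^ ℓ)))
  intro x hx
  simp only [coarse, Set.mem_iUnion, Set.mem_setOf_eq] at hx
  obtain ⟨s, hs, hxs⟩ := hx
  have hne : (cube ℓ s ∩ R).Nonempty := by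
    apply Set.nonempty_of_ncard_ne_zero
    have : (0:ℕ) < 2 ^ (ℓ * d) := Nat.pow_pos (by norm_num)
    omega
  obtain ⟨t, htc, htR⟩ := hne
  refine Set.mem_biUnion htR ?_
  rwa [← cube_base_eq htc]

lemma coarse_zero {d : ℕ} (R : Set (Pt d)) : coarse 0 R = R := by
  have hcube : ∀ s : Pt d, cube 0 s = {s} := by
    intro s
    ext t
    simp only [cube, Set.mem_setOf_eq, Set.mem_singleton_iff, pow_zero, one_mul]
    constructor
    · intro h; funext i; have := h i; omega
    · rintro rfl i; omega
  ext x
  simp only [coarse, Set.mem_iUnion, Set.mem_setOf_eq, hcube, Nat.zero_mul, pow_zero,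
    Set.mem_singleton_iff]
  constructor
  · rintro ⟨s, hs, rfl⟩
    by_contra hx
    rw [Set.singleton_inter_eq_empty.mpr hx] at hs
    simp at hs
  · intro hx
    refine ⟨x, ?_, rfl⟩
    rw [Set.inter_eq_self_of_subset_left (Set.singleton_subset_iff.mpr hx)]
    simp

lemma sqrt_add_le' {x y : ℝ} (hx : 0 ≤ x) (hy : 0 ≤ y) :
    Real.sqrt (x + y) ≤ Real.sqrt x + Real.sqrt y := by
  have h := Real.sqrt_le_sqrt (show x + y ≤ (Real.sqrt x + Real.sqrt y) ^ 2 by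
    nlinarith [Real.sq_sqrt hx, Real.sq_sqrt hy, Real.sqrt_nonneg x, Real.sqrt_nonneg y,
      mul_nonneg (Real.sqrt_nonneg x) (Real.sqrt_nonneg y)])
  rwa [Real.sqrt_sq (by positivity)] at h

lemma sqrt_symmDiff_triangle {α : Type*} {A B C : Set α}
    (hAB : (symmDiff A B).Finite) (hBC : (symmDiff B C).Finite) :
    Real.sqrt ((symmDiff A C).ncard) ≤
      Real.sqrt ((symmDiff A B).ncard) + Real.sqrt ((symmDiff B C).ncard) := by
  have hsub : symmDiff A C ⊆ symmDiff A B ∪ symmDiff B C := symmDiff_triangle A B C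
  have h1 : (symmDiff A C).ncard ≤ (symmDiff A B).ncard + (symmDiff B C).ncard :=
    le_trans (Set.ncard_le_ncard hsub (hAB.union hBC)) (Set.ncard_union_le _ _)
  calc Real.sqrt ((symmDiff A C).ncard)
      ≤ Real.sqrt (((symmDiff A B).ncard : ℝ) + (symmDiff B C).ncard) := by
        apply Real.sqrt_le_sqrt; exact_mod_cast h1
    _ ≤ _ := sqrt_add_le' (by positivity) (by positivity)

lemma sqrt_two_pow (k : ℕ) : Real.sqrt (2 ^ k) = Real.sqrt 2 ^ k := by
  induction k with
  | zero => simp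
  | succ k ih => rw [pow_succ, pow_succ, Real.sqrt_mul (by positivity), ih]

lemma chain_bound {d : ℕ} {b₂ : ℝ}
    (hincr : ∀ (R : Set (Pt d)), R.Finite → ∀ j : ℕ, 1 ≤ j →
      ((symmDiff (coarse j R) (coarse (j - 1) R)).ncard : ℝ)
        ≤ b₂ * 2 ^ j * (extBoundary R).ncard)
    {R : Set (Pt d)} (hR : R.Finite) (ℓ : ℕ) :
    Real.sqrt ((symmDiff R (coarse ℓ R)).ncard) ≤
      ∑ j ∈ Finset.range ℓ, Real.sqrt (b₂ * 2 ^ (j + 1) * (extBoundary R).ncard) := by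
  induction ℓ with
  | zero => rw [coarse_zero, symmDiff_self]; simp
  | succ ℓ ih =>
    rw [Finset.sum_range_succ]
    have hfin1 : (symmDiff R (coarse ℓ R)).Finite :=
      (hR.union (coarse_finite ℓ hR)).subset symmDiff_le_sup
    have hfin2 : (symmDiff (coarse ℓ R) (coarse (ℓ + 1) R)).Finite :=
      ((coarse_finite ℓ hR).union (coarse_finite (ℓ + 1) hR)).subset symmDiff_le_sup
    have htri := sqrt_symmDiff_triangle (A := R) (B := coarse ℓ R) (C := coarse (ℓ + 1) R)
      hfin1 hfin2
    have hstep : Real.sqrt ((symmDiff (coarse ℓ R) (coarse (ℓ + 1) R)).ncard) ≤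
        Real.sqrt (b₂ * 2 ^ (ℓ + 1) * (extBoundary R).ncard) := by
      apply Real.sqrt_le_sqrt
      have := hincr R hR (ℓ + 1) (by omega)
      simpa [symmDiff_comm] using this
    calc Real.sqrt ((symmDiff R (coarse (ℓ + 1) R)).ncard) ≤ _ := htri
      _ ≤ _ := add_le_add ih hstep


/-- given the coarse-graining increment bound
`|B_j(R) Δ B_{j-1}(R)| ≤ b₂ 2^j |∂R|` (with `B₀(R) = R`), if `|∂R₁|, |∂R₂| ≤ n` and
`B_ℓ(R₁) = B_ℓ(R₂)` for some `ℓ > 0`, then for the metric `d(R₁,R₂) = ν |R₁ Δ R₂|^{1/2}`,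
`d(R₁,R₂) ≤ ν b₃ 2^{ℓ/2} n^{1/2}` with `b₃ = 2(√2+1)√(2 b₂)`. -/
theorem symmdiff_bound_explicit_constant (d : ℕ) (hd : 1 ≤ d) (ν : ℝ) (hν : 0 < ν)
    (b₂ : ℝ) (hb₂ : 0 < b₂)
    (hincr : ∀ (R : Set (Pt d)), R.Finite → ∀ j : ℕ, 1 ≤ j →
      ((symmDiff (coarse j R) (coarse (j - 1) R)).ncard : ℝ)
        ≤ b₂ * 2 ^ j * (extBoundary R).ncard) :
    ∀ (n ℓ : ℕ), 0 < ℓ →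
      ∀ (R₁ R₂ : Set (Pt d)), R₁.Finite → R₂.Finite →
        (extBoundary R₁).ncard ≤ n → (extBoundary R₂).ncard ≤ n →
        coarse ℓ R₁ = coarse ℓ R₂ →
        ν * Real.sqrt ((symmDiff R₁ R₂).ncard)
          ≤ ν * (2 * (Real.sqrt 2 + 1) * Real.sqrt (2 * b₂))
              * (2 : ℝ) ^ ((ℓ : ℝ) / 2) * Real.sqrt n := by
  intro n ℓ hℓ R₁ R₂ h1 h2 hn1 hn2 heq
  set s := Real.sqrt 2 with hs
  have hs2 : s ^ 2 = 2 := Real.sq_sqrt (by norm_num)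
  have hs0 : 0 ≤ s := Real.sqrt_nonneg 2
  have hs1 : 1 ≤ s := by nlinarith
  -- step 1: triangle through coarse ℓ
  have hfin1 : (symmDiff R₁ (coarse ℓ R₁)).Finite :=
    (h1.union (coarse_finite ℓ h1)).subset symmDiff_le_sup
  have hfin2 : (symmDiff (coarse ℓ R₁) R₂).Finite := by
    rw [heq]
    exact ((coarse_finite ℓ h2).union h2).subset symmDiff_le_sup
  have htri := sqrt_symmDiff_triangle (A := R₁) (B := coarse ℓ R₁) (C := R₂) hfin1 hfin2
  -- each chain bounded by sum with n
  have hsum : ∀ (R : Set (Pt d)), R.Finite → (extBoundary R).ncard ≤ n →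
      (∑ j ∈ Finset.range ℓ, Real.sqrt (b₂ * 2 ^ (j + 1) * (extBoundary R).ncard))
        ≤ ∑ j ∈ Finset.range ℓ, Real.sqrt (b₂ * 2 ^ (j + 1) * n) := by
    intro R hR hn
    apply Finset.sum_le_sum
    intro j _
    apply Real.sqrt_le_sqrt
    have : ((extBoundary R).ncard : ℝ) ≤ (n : ℝ) := by exact_mod_cast hn
    have hp : (0:ℝ) ≤ b₂ * 2 ^ (j + 1) := by positivity
    nlinarith
  have hch1 : Real.sqrt ((symmDiff R₁ (coarse ℓ R₁)).ncard) ≤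
      ∑ j ∈ Finset.range ℓ, Real.sqrt (b₂ * 2 ^ (j + 1) * n) :=
    le_trans (chain_bound hincr h1 ℓ) (hsum R₁ h1 hn1)
  have hch2 : Real.sqrt ((symmDiff (coarse ℓ R₁) R₂).ncard) ≤
      ∑ j ∈ Finset.range ℓ, Real.sqrt (b₂ * 2 ^ (j + 1) * n) := by
    rw [heq, symmDiff_comm]
    exact le_trans (chain_bound hincr h2 ℓ) (hsum R₂ h2 hn2)
  -- step 2: geometric sum
  have hterm : ∀ j : ℕ, Real.sqrt (b₂ * 2 ^ (j + 1) * (n:ℝ)) =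
      Real.sqrt (b₂ * n) * s ^ (j + 1) := by
    intro j
    rw [show b₂ * 2 ^ (j + 1) * (n:ℝ) = (b₂ * n) * 2 ^ (j + 1) by ring,
      Real.sqrt_mul (by positivity), sqrt_two_pow]
  have hgeom : ∀ m : ℕ, (∑ j ∈ Finset.range m, Real.sqrt (b₂ * 2 ^ (j + 1) * (n:ℝ)))
      ≤ Real.sqrt (b₂ * n) * (s * (s + 1)) * (s ^ m - 1) := by
    intro m
    induction m with
    | zero => simp
    | succ m ih =>
      rw [Finset.sum_range_succ, hterm]
      have key : Real.sqrt (b₂ * n) * s ^ (m + 1) =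
          Real.sqrt (b₂ * n) * (s * (s + 1)) * (s ^ (m + 1) - 1)
            - Real.sqrt (b₂ * n) * (s * (s + 1)) * (s ^ m - 1) := by
        have hh : s * (s + 1) * (s ^ (m + 1) - s ^ m) = s ^ (m + 1) := by
          rw [pow_succ]
          linear_combination (s ^ m * s) * hs2
        linear_combination Real.sqrt (b₂ * n) * hh - (2 * Real.sqrt (b₂ * n) * s * s ^ m) * hs2
      linarith [ih, key.le, key.ge]
  have hfinal : Real.sqrt ((symmDiff R₁ R₂).ncard) ≤
      2 * (Real.sqrt (b₂ * n) * (s * (s + 1)) * s ^ ℓ) := by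
    have hpos : 0 ≤ Real.sqrt (b₂ * n) * (s * (s + 1)) := by positivity
    have hmono : Real.sqrt (b₂ * n) * (s * (s + 1)) * (s ^ ℓ - 1) ≤
        Real.sqrt (b₂ * n) * (s * (s + 1)) * s ^ ℓ := by nlinarith [pow_nonneg hs0 ℓ]
    calc Real.sqrt ((symmDiff R₁ R₂).ncard) ≤ _ := htri
      _ ≤ 2 * (Real.sqrt (b₂ * n) * (s * (s + 1)) * (s ^ ℓ - 1)) := by
          linarith [hch1, hch2, hgeom ℓ]
      _ ≤ _ := by linarith
  -- step 3: identify constants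
  have h2ℓ : (2 : ℝ) ^ ((ℓ : ℝ) / 2) = s ^ ℓ := by
    rw [Real.rpow_div_two_eq_sqrt _ (by norm_num), ← hs, Real.rpow_natCast]
  have hcc : Real.sqrt (2 * b₂) * Real.sqrt (n : ℝ) = s * Real.sqrt (b₂ * n) := by
    rw [Real.sqrt_mul (by norm_num), ← hs, mul_assoc, ← Real.sqrt_mul hb₂.le]
  have hrhs : ν * (2 * (s + 1) * Real.sqrt (2 * b₂)) * (2 : ℝ) ^ ((ℓ : ℝ) / 2) * Real.sqrt n
      = ν * (2 * (Real.sqrt (b₂ * n) * (s * (s + 1)) * s ^ ℓ)) := by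
    rw [h2ℓ]
    calc ν * (2 * (s + 1) * Real.sqrt (2 * b₂)) * s ^ ℓ * Real.sqrt n
        = ν * (2 * (s + 1)) * s ^ ℓ * (Real.sqrt (2 * b₂) * Real.sqrt n) := by ring
      _ = ν * (2 * (s + 1)) * s ^ ℓ * (s * Real.sqrt (b₂ * n)) := by rw [hcc]
      _ = _ := by ring
  rw [hrhs]
  exact mul_le_mul_of_nonneg_left hfinal hν.le
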